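/- Let M ⊆ ℕ^{k+1} × ℕ^{k+1} be the set of pairs (α, β) such that α_{i−1} + β_i = α_i + β_{i−1} for every i ∈ {0,…,k} (indices read modulo k+1). Then M is a submonoid of ℕ^{k+1} × ℕ^{k+1} under addition, and M equals the submonoid generated by the k+3 elements ((1,1,…,1),(0,0,…,0)), ((0,0,…,0),(1,1,…,1)), and (e_i, e_i) for i ∈ {0,…,k}, where e_i denotes the i-th standard basis vector of ℕ^{k+1}. (This encodes that the torus-invariant functions on the quiver representation space are generated by u = a_0⋯a_k, v = b_0⋯b_k and z_i = a_i b_i, so the affine quotient is the universal unfolding uv = z_0⋯z_k of the A_k surface singularity.) -/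

import Mathlib

/-- The set `M` of pairs `(α, β) ∈ ℕ^{k+1} × ℕ^{k+1}` with
`α_{i-1} + β_i = α_i + β_{i-1}` for all `i` (indices mod `k+1`) is a submonoid of
`ℕ^{k+1} × ℕ^{k+1}`, and it equals the submonoid generated by the `k+3` elements
`((1,…,1),(0,…,0))`, `((0,…,0),(1,…,1))` and `(e_i, e_i)` for `0 ≤ i ≤ k`. -/
theorem stmt5 (k : ℕ) (hk : 1 ≤ k) :
    {p : (Fin (k + 1) → ℕ) × (Fin (k + 1) → ℕ) |
        ∀ i, p.1 (i - 1) + p.2 i = p.1 i + p.2 (i - 1)} =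
      (AddSubmonoid.closure
        (({((fun _ => 1 : Fin (k + 1) → ℕ), (fun _ => 0 : Fin (k + 1) → ℕ)),
            ((fun _ => 0 : Fin (k + 1) → ℕ), (fun _ => 1 : Fin (k + 1) → ℕ))} :
              Set ((Fin (k + 1) → ℕ) × (Fin (k + 1) → ℕ))) ∪
          Set.range (fun i : Fin (k + 1) =>
            ((fun j => if j = i then 1 else 0 : Fin (k + 1) → ℕ),
             (fun j => if j = i then 1 else 0 : Fin (k + 1) → ℕ)))) :
        AddSubmonoid ((Fin (k + 1) → ℕ) × (Fin (k + 1) → ℕ))) := by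
  set G : Set ((Fin (k + 1) → ℕ) × (Fin (k + 1) → ℕ)) :=
    (({((fun _ => 1 : Fin (k + 1) → ℕ), (fun _ => 0 : Fin (k + 1) → ℕ)),
        ((fun _ => 0 : Fin (k + 1) → ℕ), (fun _ => 1 : Fin (k + 1) → ℕ))} :
          Set ((Fin (k + 1) → ℕ) × (Fin (k + 1) → ℕ))) ∪
      Set.range (fun i : Fin (k + 1) =>
        ((fun j => if j = i then 1 else 0 : Fin (k + 1) → ℕ),
         (fun j => if j = i then 1 else 0 : Fin (k + 1) → ℕ)))) with hG
  have hg : ∀ i : Fin (k + 1),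
      ((fun j => if j = i then 1 else 0 : Fin (k + 1) → ℕ),
       (fun j => if j = i then 1 else 0 : Fin (k + 1) → ℕ)) ∈ AddSubmonoid.closure G :=
    fun i => AddSubmonoid.subset_closure (Or.inr ⟨i, rfl⟩)
  have hu : ((fun _ => 1 : Fin (k + 1) → ℕ), (fun _ => 0 : Fin (k + 1) → ℕ)) ∈
      AddSubmonoid.closure G := AddSubmonoid.subset_closure (Or.inl (by simp))
  have hv : ((fun _ => 0 : Fin (k + 1) → ℕ), (fun _ => 1 : Fin (k + 1) → ℕ)) ∈
      AddSubmonoid.closure G := AddSubmonoid.subset_closure (Or.inl (by simp))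
  have hsum : ∀ γ : Fin (k + 1) → ℕ,
      (∑ i, γ i • ((fun j => if j = i then 1 else 0 : Fin (k + 1) → ℕ),
        (fun j => if j = i then 1 else 0 : Fin (k + 1) → ℕ))) = ((γ, γ) :
          (Fin (k + 1) → ℕ) × (Fin (k + 1) → ℕ)) := by
    intro γ
    apply Prod.ext <;>
      · funext j
        simp [Prod.fst_sum, Prod.snd_sum, Finset.sum_apply, mul_ite]
  ext p
  obtain ⟨α, β⟩ := p
  simp only [Set.mem_setOf_eq, SetLike.mem_coe]
  constructor
  · intro h
    have key : ∀ i : Fin (k + 1), α i + β 0 = α 0 + β i := by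
      intro i
      induction i using Fin.induction with
      | zero => ring
      | succ j ih =>
        have h1 := h j.succ
        rw [show (j.succ : Fin (k + 1)) - 1 = j.castSucc from by
          rw [← Fin.coeSucc_eq_succ, add_sub_cancel_right]] at h1
        omega
    rcases le_total (α 0) (β 0) with hle | hle
    · have hβ : ∀ i, β i = α i + (β 0 - α 0) := by
        intro i; have := key i; omega
      have heq : ((α, β) : (Fin (k + 1) → ℕ) × (Fin (k + 1) → ℕ)) =
          (β 0 - α 0) • ((fun _ => 0 : Fin (k + 1) → ℕ), (fun _ => 1 : Fin (k + 1) → ℕ)) +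
            ∑ i, α i • ((fun j => if j = i then 1 else 0 : Fin (k + 1) → ℕ),
              (fun j => if j = i then 1 else 0 : Fin (k + 1) → ℕ)) := by
        rw [hsum]
        apply Prod.ext <;> funext j <;> simp [hβ j] <;> omega
      rw [heq]
      exact add_mem (nsmul_mem hv _)
        (sum_mem fun i _ => nsmul_mem (hg i) _)
    · have hα : ∀ i, α i = β i + (α 0 - β 0) := by
        intro i; have := key i; omega
      have heq : ((α, β) : (Fin (k + 1) → ℕ) × (Fin (k + 1) → ℕ)) =
          (α 0 - β 0) • ((fun _ => 1 : Fin (k + 1) → ℕ), (fun _ => 0 : Fin (k + 1) → ℕ)) +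
            ∑ i, β i • ((fun j => if j = i then 1 else 0 : Fin (k + 1) → ℕ),
              (fun j => if j = i then 1 else 0 : Fin (k + 1) → ℕ)) := by
        rw [hsum]
        apply Prod.ext <;> funext j <;> simp [hα j] <;> omega
      rw [heq]
      exact add_mem (nsmul_mem hu _)
        (sum_mem fun i _ => nsmul_mem (hg i) _)
  · intro hp
    have hS : AddSubmonoid.closure G ≤
        { carrier := {q : (Fin (k + 1) → ℕ) × (Fin (k + 1) → ℕ) |
            ∀ i, q.1 (i - 1) + q.2 i = q.1 i + q.2 (i - 1)},
          zero_mem' := fun i => rfl,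
          add_mem' := by
            intro a b ha hb i
            have := ha i; have := hb i
            simp only [Prod.fst_add, Prod.snd_add, Pi.add_apply]
            omega } := by
      rw [AddSubmonoid.closure_le]
      rintro q (hq | ⟨i, rfl⟩)
      · simp only [Set.mem_insert_iff, Set.mem_singleton_iff] at hq
        rcases hq with rfl | rfl <;> exact fun i => rfl
      · exact fun j => add_comm _ _
    exact hS hp
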